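/- For every natural number n, α(γ(n)) = n, where γ is the standard RPF natural spelling function and α is the standard RPF natural evaluation function; i.e., α restricted to the image of γ is the inverse of γ. -/
import Mathlib


/-- The standard RPF natural spelling function.  `true` = '(' and `false` = ')'.
For `n ≥ 2`, `γ n` is the concatenation over `i = 0, …, m-1` of `"(" ++ γ aᵢ ++ ")"`,
where `aᵢ` is the exponent of the `i`-th prime (`Nat.nth Nat.Prime i`, 0-indexed, so the
0th prime is 2) in the factorization of `n`, and the `(m-1)`-st prime is the greatest
prime factor of `n` (so `m = Nat.count Nat.Prime (gpf n) + 1`). -/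
noncomputable def gamma : ℕ → List Bool
  | 0 => []
  | 1 => [true, false]
  | (n+2) =>
    ((List.range (Nat.count Nat.Prime ((n+2).factorization.support.sup id) + 1)).map
      (fun i => (true :: gamma ((n+2).factorization (Nat.nth Nat.Prime i))) ++ [false])).flatten
termination_by n => n
decreasing_by exact Nat.factorization_lt _ (by omega)

/-- Length of the first chunk of `w` (smallest positive `k` such that the first `k`
symbols are balanced); `0` if no such `k` exists. -/
noncomputable def firstChunkLen (w : List Bool) : ℕ :=
  sInf {k | 0 < k ∧ (w.take k).count true = (w.take k).count false}

/-- Auxiliary evaluator: `alphaAux i w` is `∏ⱼ p_{i+j} ^ α(dⱼ)` over the chunks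
`(d₀)(d₁)…` of `w`, where `α(ε) = 0`. -/
noncomputable def alphaAux (i : ℕ) (w : List Bool) : ℕ :=
  if w = [] then 1
  else if 0 < firstChunkLen w then
    (Nat.nth Nat.Prime i) ^
        (if ((w.take (firstChunkLen w)).drop 1).dropLast = [] then 0
         else alphaAux 0 (((w.take (firstChunkLen w)).drop 1).dropLast))
      * alphaAux (i+1) (w.drop (firstChunkLen w))
  else 1
termination_by w.length
decreasing_by
  · simp only [List.length_dropLast, List.length_drop, List.length_take]
    rename_i hw _; cases w <;> simp_all <;> omega
  · simp only [List.length_drop]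
    rename_i hw hc; cases w <;> simp_all <;> omega

/-- The standard RPF natural evaluation function `α : 𝒟 → ℕ`:
`α ε = 0` and `α w = ∏ᵢ pᵢ ^ α(dᵢ)` over the chunks `(dᵢ)` of `w`. -/
noncomputable def alpha (w : List Bool) : ℕ := if w = [] then 0 else alphaAux 0 w

/-! ### Dyck words -/

def IsDyck (w : List Bool) : Prop :=
  w.count true = w.count false ∧ ∀ k, ((w.take k).count false ≤ (w.take k).count true)

lemma isDyck_nil : IsDyck [] := by constructor <;> simp

lemma isDyck_append {a b : List Bool} (ha : IsDyck a) (hb : IsDyck b) : IsDyck (a ++ b) := by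
  obtain ⟨ha1, ha2⟩ := ha
  obtain ⟨hb1, hb2⟩ := hb
  constructor
  · simp [List.count_append, ha1, hb1]
  · intro k
    rcases le_or_gt k a.length with h | h
    · rw [List.take_append_of_le_length h]; exact ha2 k
    · rw [List.take_append, List.take_of_length_le h.le]
      simp only [List.count_append]
      have := hb2 (k - a.length)
      omega

lemma isDyck_wrap {d : List Bool} (hd : IsDyck d) : IsDyck (true :: d ++ [false]) := by
  obtain ⟨h1, h2⟩ := hd
  constructor
  · simp [List.count_append, List.count_cons, h1]
  · intro k
    rcases Nat.eq_zero_or_pos k with rfl | hk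
    · simp
    · rcases le_or_gt k (d.length + 1) with h | h
      · have : (true :: d ++ [false]).take k = true :: d.take (k-1) := by
          rw [List.cons_append, List.take_cons hk]
          congr 1
          rw [List.take_append_of_le_length (by omega)]
        rw [this]
        simp only [List.count_cons]
        norm_num
        have : (d.take (k-1)).count false ≤ (d.take (k-1)).count true := h2 (k-1)
        omega
      · rw [List.take_of_length_le (by simp; omega)]
        simp [List.count_append, List.count_cons, h1]

lemma isDyck_flatten {L : List (List Bool)} (h : ∀ d ∈ L, IsDyck d) : IsDyck L.flatten := by
  induction L with
  | nil => simpa using isDyck_nil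
  | cons a t ih =>
    rw [List.flatten_cons]
    exact isDyck_append (h a (by simp)) (ih fun d hd => h d (by simp [hd]))

lemma gamma_isDyck : ∀ n, IsDyck (gamma n) := by
  intro n
  induction n using Nat.strong_induction_on with
  | _ n ih =>
    match n with
    | 0 => rw [show gamma 0 = [] from by rw [gamma]]; exact isDyck_nil
    | 1 =>
      rw [show gamma 1 = true :: [] ++ [false] from by rw [gamma]; rfl]
      exact isDyck_wrap isDyck_nil
    | (k+2) =>
      rw [gamma]
      apply isDyck_flatten
      intro d hd
      simp only [List.mem_map, List.mem_range] at hd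
      obtain ⟨j, _, rfl⟩ := hd
      rw [List.cons_append]
      exact isDyck_wrap (ih _ (Nat.factorization_lt _ (by omega)))

/-! ### Chunk extraction -/

section
variable {d rest : List Bool}

lemma take_small {k : ℕ} (hk : 0 < k) (hk2 : k ≤ d.length + 1) :
    (true :: d ++ false :: rest).take k = true :: d.take (k-1) := by
  rw [List.cons_append, List.take_cons hk]
  congr 1
  rw [List.take_append_of_le_length (by omega)]

lemma take_full : (true :: d ++ false :: rest).take (d.length + 2) = true :: d ++ [false] := by
  have : true :: d ++ false :: rest = (true :: d ++ [false]) ++ rest := by simp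
  rw [this]
  rw [List.take_append_of_le_length (by simp)]
  rw [List.take_of_length_le (by simp)]

lemma drop_full : (true :: d ++ false :: rest).drop (d.length + 2) = rest := by
  have : true :: d ++ false :: rest = (true :: d ++ [false]) ++ rest := by simp
  rw [this]
  have h2 : d.length + 2 = (true :: d ++ [false]).length := by simp
  rw [h2, List.drop_left]

lemma firstChunkLen_eq (hd : IsDyck d) :
    firstChunkLen (true :: d ++ false :: rest) = d.length + 2 := by
  have hmem : d.length + 2 ∈ {k | 0 < k ∧ ((true :: d ++ false :: rest).take k).count true
      = ((true :: d ++ false :: rest).take k).count false} := by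
    refine ⟨by omega, ?_⟩
    rw [take_full]
    simp [List.count_cons, List.count_append, hd.1]
  refine le_antisymm (Nat.sInf_le hmem) (le_csInf ⟨_, hmem⟩ ?_)
  rintro k ⟨hk0, hk⟩
  by_contra hlt
  push_neg at hlt
  rw [take_small hk0 (by omega)] at hk
  have := hd.2 (k-1)
  simp only [List.count_cons] at hk
  norm_num at hk
  omega

lemma alphaAux_cons (i : ℕ) (hd : IsDyck d) :
    alphaAux i (true :: d ++ false :: rest) =
      (Nat.nth Nat.Prime i) ^ alpha d * alphaAux (i+1) rest := by
  rw [alphaAux]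
  rw [if_neg (by simp), firstChunkLen_eq hd, if_pos (by omega)]
  rw [take_full, drop_full]
  have h1 : ((true :: d ++ [false]).drop 1).dropLast = d := by
    simp [List.dropLast_concat]
  rw [h1, alpha]
end

lemma alphaAux_nil (i : ℕ) : alphaAux i [] = 1 := by rw [alphaAux]; simp

lemma chunks_eval : ∀ (m : ℕ) (f : ℕ → List Bool) (i : ℕ), (∀ j < m, IsDyck (f j)) →
    alphaAux i (((List.range m).map (fun j => true :: f j ++ [false])).flatten)
      = ∏ j ∈ Finset.range m, (Nat.nth Nat.Prime (i + j)) ^ alpha (f j) := by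
  intro m
  induction m with
  | zero => intro f i _; simp [alphaAux_nil]
  | succ m ihm =>
    intro f i h
    rw [List.range_succ_eq_map]
    simp only [List.map_cons, List.map_map, List.flatten_cons]
    have hrw : (true :: f 0 ++ [false]) ++
        ((List.range m).map ((fun j => true :: f j ++ [false]) ∘ Nat.succ)).flatten
        = true :: f 0 ++ false ::
          ((List.range m).map (fun j => true :: f (j+1) ++ [false])).flatten := by
      simp [Function.comp_def, Nat.succ_eq_add_one]
    rw [hrw, alphaAux_cons i (h 0 (by omega))]
    rw [ihm (fun j => f (j+1)) (i+1) (fun j hj => h (j+1) (by omega))]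
    rw [Finset.prod_range_succ']
    rw [mul_comm]
    congr 1
    apply Finset.prod_congr rfl
    intro j _
    congr 2
    omega

lemma prod_pow_factorization (n : ℕ) (hn : 2 ≤ n) :
    ∏ j ∈ Finset.range (Nat.count Nat.Prime (n.factorization.support.sup id) + 1),
      (Nat.nth Nat.Prime j) ^ n.factorization (Nat.nth Nat.Prime j) = n := by
  set m := Nat.count Nat.Prime (n.factorization.support.sup id) + 1 with hm
  have hinj : Function.Injective (Nat.nth Nat.Prime) :=
    Nat.nth_injective Nat.infinite_setOf_prime
  have himg : ∏ j ∈ Finset.range m, (Nat.nth Nat.Prime j) ^ n.factorization (Nat.nth Nat.Prime j)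
      = ∏ p ∈ (Finset.range m).image (Nat.nth Nat.Prime), p ^ n.factorization p := by
    rw [Finset.prod_image (fun a _ b _ h => hinj h)]
  rw [himg]
  have hsub : n.factorization.support ⊆ (Finset.range m).image (Nat.nth Nat.Prime) := by
    intro p hp
    have hpp : p.Prime := Nat.prime_of_mem_primeFactors (by rwa [Nat.support_factorization] at hp)
    have hle : p ≤ n.factorization.support.sup id := Finset.le_sup (f := id) hp
    have : Nat.count Nat.Prime p ≤ Nat.count Nat.Prime (n.factorization.support.sup id) :=
      Nat.count_monotone _ hle
    refine Finset.mem_image.2 ⟨Nat.count Nat.Prime p, Finset.mem_range.2 (by omega),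
      Nat.nth_count hpp⟩
  rw [← Finset.prod_subset hsub (fun p _ hp => by
    rw [Finsupp.notMem_support_iff.1 hp, pow_zero])]
  exact Nat.factorization_prod_pow_eq_self (by omega)

/-- For every natural number `n`, `α (γ n) = n`. -/
theorem alpha_gamma : ∀ n : ℕ, alpha (gamma n) = n := by
  intro n
  induction n using Nat.strong_induction_on with
  | _ n ih =>
    match n with
    | 0 => rw [gamma]; rfl
    | 1 =>
      have h1 : gamma 1 = true :: [] ++ false :: [] := by rw [gamma]; rfl
      rw [h1, alpha, if_neg (by simp), alphaAux_cons 0 isDyck_nil, alphaAux_nil]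
      simp [alpha]
    | (k+2) =>
      rw [gamma]
      set e : ℕ → ℕ := fun j => (k+2).factorization (Nat.nth Nat.Prime j) with he
      set m := Nat.count Nat.Prime ((k+2).factorization.support.sup id) + 1 with hm
      have hflat : ((List.range m).map (fun i => (true :: gamma (e i)) ++ [false])).flatten
          = ((List.range m).map (fun i => true :: gamma (e i) ++ [false])).flatten := by
        simp
      have hne : ((List.range m).map (fun i => true :: gamma (e i) ++ [false])).flatten ≠ [] := by
        rw [hm, List.range_succ_eq_map]
        simp
      rw [hflat, alpha, if_neg hne]
      rw [chunks_eval m (fun j => gamma (e j)) 0 (fun j _ => gamma_isDyck (e j))]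
      have hae : ∀ j, alpha (gamma (e j)) = e j := fun j =>
        ih (e j) (Nat.factorization_lt _ (by omega))
      simp only [hae, zero_add]
      exact prod_pow_factorization (k+2) (by omega)
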